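/- Let X be a real Banach space, L : X → X a compact linear operator, and R : ℝ × X → X continuous and compact (it maps bounded sets to relatively compact sets) with ‖R(λ,x)‖/‖x‖ → 0 as 0 ≠ ‖x‖ → 0 uniformly for λ in bounded sets. If λ₀ ≠ 0 is a bifurcation point of the equation λx = Lx + R(λ,x), then λ₀ is an eigenvalue of L, i.e. ker(λ₀I − L) ≠ {0}. -/
import Mathlib


open Filter

/-- In a real Banach space, with L compact linear and R continuous, compact
and of higher order at the origin uniformly for λ bounded, any non-zero bifurcation point
λ₀ of λx = Lx + R(λ,x) is an eigenvalue of L. -/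
theorem stmt1 {X : Type*} [NormedAddCommGroup X] [NormedSpace ℝ X] [CompleteSpace X]
    (L : X →L[ℝ] X) (hLc : IsCompactOperator (⇑L))
    (R : ℝ × X → X) (hRcont : Continuous R)
    (hRcomp : ∀ s : Set (ℝ × X), Bornology.IsBounded s → IsCompact (closure (R '' s)))
    (hsmall : ∀ C > (0 : ℝ), ∀ ε > (0 : ℝ), ∃ δ > (0 : ℝ), ∀ lam : ℝ, |lam| ≤ C →
      ∀ x : X, x ≠ 0 → ‖x‖ < δ → ‖R (lam, x)‖ ≤ ε * ‖x‖)
    (lam₀ : ℝ) (hlam₀ : lam₀ ≠ 0)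
    (hbif : ∃ (lams : ℕ → ℝ) (xs : ℕ → X),
      (∀ n, xs n ≠ 0 ∧ lams n • xs n = L (xs n) + R (lams n, xs n)) ∧
      Tendsto lams atTop (nhds lam₀) ∧
      Tendsto (fun n => ‖xs n‖) atTop (nhds 0)) :
    ∃ x : X, x ≠ 0 ∧ L x = lam₀ • x := by
  obtain ⟨lams, xs, hsol, hl, hx⟩ := hbif
  have hxne : ∀ n, xs n ≠ 0 := fun n => (hsol n).1
  have hxpos : ∀ n, (0:ℝ) < ‖xs n‖ := fun n => norm_pos_iff.2 (hxne n)
  set ys : ℕ → X := fun n => ‖xs n‖⁻¹ • xs n with hys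
  have hysnorm : ∀ n, ‖ys n‖ = 1 := by
    intro n
    simp [hys, norm_smul, abs_of_nonneg (inv_nonneg.2 (norm_nonneg _)),
      inv_mul_cancel₀ (hxpos n).ne']
  set r : ℕ → X := fun n => ‖xs n‖⁻¹ • R (lams n, xs n) with hr
  -- the relation for ys
  have hrel : ∀ n, lams n • ys n = L (ys n) + r n := by
    intro n
    have := (hsol n).2
    calc lams n • ys n = ‖xs n‖⁻¹ • (lams n • xs n) := by
          rw [smul_comm]
      _ = ‖xs n‖⁻¹ • (L (xs n) + R (lams n, xs n)) := by rw [this]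
      _ = L (ys n) + r n := by
          rw [smul_add, hys, hr]
          simp [map_smul]
  -- remainder tends to 0
  have hr0 : Tendsto r atTop (nhds 0) := by
    rw [NormedAddCommGroup.tendsto_nhds_zero]
    intro ε hε
    obtain ⟨δ, hδ, hδ'⟩ := hsmall (|lam₀| + 1) (by positivity) (ε / 2) (by positivity)
    have h1 : ∀ᶠ n in atTop, |lams n| ≤ |lam₀| + 1 := by
      have : ∀ᶠ n in atTop, lams n ∈ Metric.closedBall lam₀ 1 :=
        hl (Metric.closedBall_mem_nhds _ one_pos)
      filter_upwards [this] with n hn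
      have : |lams n - lam₀| ≤ 1 := by simpa [Real.dist_eq] using hn
      calc |lams n| = |lams n - lam₀ + lam₀| := by ring_nf
        _ ≤ |lams n - lam₀| + |lam₀| := abs_add_le _ _
        _ ≤ |lam₀| + 1 := by linarith
    have h2 : ∀ᶠ n in atTop, ‖xs n‖ < δ := by
      have : ∀ᶠ n in atTop, ‖xs n‖ ∈ Set.Iio δ := hx (Iio_mem_nhds hδ)
      simpa using this
    filter_upwards [h1, h2] with n hn1 hn2
    have hb := hδ' (lams n) hn1 (xs n) (hxne n) hn2
    have : ‖r n‖ = ‖xs n‖⁻¹ * ‖R (lams n, xs n)‖ := by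
      simp [hr, norm_smul, abs_of_nonneg (inv_nonneg.2 (norm_nonneg _))]
    rw [this]
    calc ‖xs n‖⁻¹ * ‖R (lams n, xs n)‖ ≤ ‖xs n‖⁻¹ * (ε / 2 * ‖xs n‖) := by
          exact mul_le_mul_of_nonneg_left hb (inv_nonneg.2 (norm_nonneg _))
      _ = ε / 2 := by field_simp [(hxpos n).ne']
      _ < ε := by linarith
  -- compactness: extract convergent subsequence of L (ys n)
  have hball : ∀ n, ys n ∈ Metric.closedBall (0:X) 1 := by
    intro n; simp [hysnorm n]
  have hK : IsCompact (closure (⇑L '' Metric.closedBall 0 1)) := by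
    have : IsCompactOperator (⇑(L : X →ₗ[ℝ] X)) := hLc
    exact this.isCompact_closure_image_of_isVonNBounded
      (NormedSpace.isVonNBounded_closedBall ℝ X 1)
  have hmem : ∀ n, L (ys n) ∈ closure (⇑L '' Metric.closedBall 0 1) := fun n =>
    subset_closure ⟨ys n, hball n, rfl⟩
  obtain ⟨z, _, φ, hφ, hz⟩ := hK.tendsto_subseq hmem
  have hlφ : Tendsto (fun k => lams (φ k)) atTop (nhds lam₀) := hl.comp hφ.tendsto_atTop
  have hrφ : Tendsto (fun k => r (φ k)) atTop (nhds 0) := hr0.comp hφ.tendsto_atTop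
  -- lams φ • ys φ → z
  have h1 : Tendsto (fun k => lams (φ k) • ys (φ k)) atTop (nhds z) := by
    have := hz.add hrφ
    rw [add_zero] at this
    refine this.congr fun k => ?_
    exact (hrel (φ k)).symm
  -- ys φ → lam₀⁻¹ • z
  have h2 : Tendsto (fun k => ys (φ k)) atTop (nhds (lam₀⁻¹ • z)) := by
    have hsm : Tendsto (fun k => (lams (φ k))⁻¹ • (lams (φ k) • ys (φ k))) atTop
        (nhds (lam₀⁻¹ • z)) := (hlφ.inv₀ hlam₀).smul h1
    have hev : ∀ᶠ k in atTop, (lams (φ k))⁻¹ • (lams (φ k) • ys (φ k)) = ys (φ k) := by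
      have : ∀ᶠ k in atTop, lams (φ k) ≠ 0 := hlφ.eventually_ne hlam₀
      filter_upwards [this] with k hk
      rw [inv_smul_smul₀ hk]
    exact hsm.congr' hev
  set y := lam₀⁻¹ • z with hy
  have hynorm : ‖y‖ = 1 := by
    have : Tendsto (fun k => ‖ys (φ k)‖) atTop (nhds ‖y‖) := h2.norm
    have h1' : Tendsto (fun _ : ℕ => (1:ℝ)) atTop (nhds ‖y‖) := by
      refine this.congr fun k => (hysnorm (φ k))
    exact tendsto_nhds_unique h1' tendsto_const_nhds
  have hyne : y ≠ 0 := by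
    intro h; rw [h, norm_zero] at hynorm; norm_num at hynorm
  refine ⟨y, hyne, ?_⟩
  have hLy : Tendsto (fun k => L (ys (φ k))) atTop (nhds (L y)) :=
    (L.continuous.tendsto y).comp h2
  have : L y = z := tendsto_nhds_unique hLy hz
  rw [this, hy, smul_inv_smul₀ hlam₀]
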